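/- Let p be a prime and let r, t ≥ 1 be integers, and set k = p^t. Then there exist n (one may take n = rt) and mod-p forms φ₁, …, φ_k : 𝔽_p^n → 𝔽_p, pairwise distinct, satisfying |Z(φ_j − φ_i)| ≥ r for all 1 ≤ i < j ≤ k, such that the density inside {0,1}^n of the set {x ∈ {0,1}^n : φ₁(x) = 0, …, φ_k(x) = 0} is at least 2^{−(p−1)t}, i.e. at least k^{−a} with a = (p−1)·log 2 / log p. -/

import Mathlib

open Finset

/-- The support of a mod-p form given by its coefficient vector. -/
def supp {p n : ℕ} (φ : Fin n → ZMod p) : Finset (Fin n) :=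
  Finset.univ.filter fun i => φ i ≠ 0

/-- Evaluation of a mod-p form (given by coefficients) at a point. -/
def evalForm {p n : ℕ} (φ x : Fin n → ZMod p) : ZMod p := ∑ i, φ i * x i

/-- The sumset a₁S + ⋯ + a_mS. -/
def sumsetSub {p m : ℕ} (a : Fin m → ZMod p) (S : Finset (ZMod p)) : Finset (ZMod p) :=
  (Fintype.piFinset fun _ : Fin m => S).image fun s => ∑ i, a i * s i

/-- L(S,E): smallest L such that for all nonzero a₁,…,a_L the sumset a₁S+⋯+a_LS ⊄ E. -/
noncomputable def LSE {p : ℕ} (S E : Finset (ZMod p)) : ℕ :=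
  sInf {L : ℕ | ∀ a : Fin L → ZMod p, (∀ i, a i ≠ 0) → ¬ sumsetSub a S ⊆ E}

/-- β(p,S) = |S|^{-⌈(p-1)/(|S|-1)⌉}. -/
noncomputable def betaPS (p : ℕ) (S : Finset (ZMod p)) : ℝ :=
  ((S.card : ℝ) ^ ⌈((p : ℝ) - 1) / ((S.card : ℝ) - 1)⌉₊)⁻¹


def wtv {p r : ℕ} (v : Fin r → ZMod p) : ℕ := ((univ : Finset (Fin r)).filter fun i => v i = 1).card

def mv (p : ℕ) {r : ℕ} (v : Fin r → ZMod p) : ℕ := (p - wtv v % p) % p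

def gmap (p r d : ℕ) (v : Fin r → ZMod p) : Fin r → ZMod p :=
  fun i => if i.val < d then v i else if i.val < d + mv p v then 1 else 0

lemma card_filter_val_Ico {r : ℕ} (a b : ℕ) (hb : b ≤ r) :
    ((univ : Finset (Fin r)).filter fun i : Fin r => a ≤ i.val ∧ i.val < b).card = b - a := by
  have himg : Finset.image Fin.val ((univ : Finset (Fin r)).filter fun i : Fin r => a ≤ i.val ∧ i.val < b)
      = Finset.Ico a b := by
    ext k
    simp only [Finset.mem_image, Finset.mem_filter, Finset.mem_univ, true_and, Finset.mem_Ico]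
    constructor
    · rintro ⟨i, hi, rfl⟩; exact hi
    · rintro ⟨h1, h2⟩; exact ⟨⟨k, lt_of_lt_of_le h2 hb⟩, ⟨h1, h2⟩, rfl⟩
  rw [← Finset.card_image_of_injective _ Fin.val_injective, himg, Nat.card_Ico]

lemma sum_binary {p r : ℕ} (w : Fin r → ZMod p) (h : ∀ i, w i = 0 ∨ w i = 1) :
    ∑ i, w i = (((univ : Finset (Fin r)).filter fun i => w i = 1).card : ZMod p) := by
  have h1 : ∑ i ∈ univ.filter (fun i => w i = 1), w i
      = (((univ : Finset (Fin r)).filter fun i => w i = 1).card : ZMod p) := by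
    rw [Finset.sum_congr rfl (fun i hi => (Finset.mem_filter.mp hi).2)]
    simp
  have h2 : ∑ i ∈ univ.filter (fun i => ¬ w i = 1), w i = 0 :=
    Finset.sum_eq_zero fun i hi => (h i).resolve_right (Finset.mem_filter.mp hi).2
  rw [← Finset.sum_filter_add_sum_filter_not univ (fun i => w i = 1) w, h1, h2, add_zero]

lemma keyCount {p : ℕ} (hp : p.Prime) (r : ℕ) :
    2 ^ r ≤ 2 ^ (p - 1) *
      ((Fintype.piFinset fun _ : Fin r => ({0, 1} : Finset (ZMod p))).filter
        fun v => ∑ s, v s = 0).card := by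
  haveI : Fact p.Prime := ⟨hp⟩
  obtain ⟨d, hd⟩ : ∃ d, d = r - (p - 1) := ⟨_, rfl⟩
  have hdr : d ≤ r := by omega
  obtain ⟨Src, hSrc⟩ : ∃ S : Finset (Fin r → ZMod p), S =
    (Fintype.piFinset fun _ : Fin r => ({0, 1} : Finset (ZMod p))).filter
      (fun v => ∀ i : Fin r, d ≤ i.val → v i = 0) := ⟨_, rfl⟩
  -- card of Src
  have hSrcEq : Src = Fintype.piFinset
      (fun i : Fin r => if i.val < d then ({0, 1} : Finset (ZMod p)) else {0}) := by
    ext v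
    simp only [hSrc, Finset.mem_filter, Fintype.mem_piFinset]
    constructor
    · rintro ⟨hv, hz⟩ i
      by_cases h : i.val < d
      · simpa [h] using hv i
      · simp [h, hz i (le_of_not_gt h)]
    · rintro h
      constructor
      · intro i
        by_cases hi : i.val < d
        · simpa [hi] using h i
        · have := h i; simp [hi] at this; simp [this]
      · intro i hi
        have := h i; simpa [Nat.not_lt.mpr hi] using this
  have hcardSrc : Src.card = 2 ^ d := by
    rw [hSrcEq, Fintype.card_piFinset]
    have : ∀ i : Fin r, (if i.val < d then ({0, 1} : Finset (ZMod p)) else {0}).card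
        = if i.val < d then 2 else 1 := by
      intro i
      by_cases h : i.val < d
      · simp [h, Finset.card_pair (zero_ne_one (α := ZMod p))]
      · simp [h]
    rw [Finset.prod_congr rfl fun i _ => this i]
    rw [← Finset.prod_filter_mul_prod_filter_not univ (fun i : Fin r => i.val < d)]
    rw [Finset.prod_congr rfl (fun i hi => if_pos (Finset.mem_filter.mp hi).2),
      Finset.prod_congr rfl (fun i hi => if_neg (Finset.mem_filter.mp hi).2)]
    simp only [Finset.prod_const, Finset.prod_const_one, mul_one]
    have := card_filter_val_Ico (r := r) 0 d hdr
    simp only [Nat.zero_le, true_and, Nat.sub_zero] at this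
    simp [this]
  -- injection from Src into target
  have hmain : Src.card ≤ ((Fintype.piFinset fun _ : Fin r => ({0, 1} : Finset (ZMod p))).filter
        fun v => ∑ s, v s = 0).card := by
    apply Finset.card_le_card_of_injOn (gmap p r d)
    · -- maps into target
      intro v hv
      rw [Finset.mem_coe, hSrc, Finset.mem_filter, Fintype.mem_piFinset] at hv
      obtain ⟨hv01', hz⟩ := hv
      have hv01 : ∀ i, v i = 0 ∨ v i = 1 := by
        intro i; have := hv01' i; simpa using this
      -- facts about sizes
      have hmlt : mv p v < p := Nat.mod_lt _ hp.pos
      have hwtd : ∀ i : Fin r, v i = 1 → i.val < d := by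
        intro i hi
        by_contra h
        rw [hz i (le_of_not_gt h)] at hi
        exact zero_ne_one hi
      have hwt_le : wtv v ≤ d := by
        have hsub : (univ.filter fun i : Fin r => v i = 1) ⊆ univ.filter fun i : Fin r => 0 ≤ i.val ∧ i.val < d := by
          intro i hi
          simp only [mem_filter, mem_univ, true_and] at *
          exact ⟨Nat.zero_le _, hwtd i hi⟩
        have := Finset.card_le_card hsub
        rwa [card_filter_val_Ico (r := r) 0 d hdr, Nat.sub_zero] at this
      have hdm : d + mv p v ≤ r := by
        by_cases hcase : p - 1 ≤ r
        · omega
        · have hd0 : d = 0 := by omega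
          have hwt0 : wtv v = 0 := by omega
          have : mv p v = 0 := by simp [mv, hwt0]
          omega
      have gbin : ∀ i, gmap p r d v i = 0 ∨ gmap p r d v i = 1 := by
        intro i
        unfold gmap
        by_cases h1 : i.val < d
        · simp only [if_pos h1]; exact hv01 i
        · by_cases h2 : i.val < d + mv p v <;> simp [h1, h2]
      rw [Finset.mem_coe, Finset.mem_filter, Fintype.mem_piFinset]
      constructor
      · intro i
        rcases gbin i with h | h <;> simp [h]
      · rw [sum_binary _ gbin]
        -- compute the filter of ones
        have hfeq : ((univ : Finset (Fin r)).filter fun i => gmap p r d v i = 1)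
            = ((univ : Finset (Fin r)).filter fun i => i.val < d ∧ v i = 1)
              ∪ ((univ : Finset (Fin r)).filter fun i => d ≤ i.val ∧ i.val < d + mv p v) := by
          ext i
          simp only [Finset.mem_union, Finset.mem_filter, Finset.mem_univ, true_and]
          unfold gmap
          by_cases h1 : i.val < d
          · simp [h1]
          · by_cases h2 : i.val < d + mv p v <;>
              simp [h1, h2, le_of_not_gt h1, (zero_ne_one (α := ZMod p)).symm]
        have hdisj : Disjoint ((univ : Finset (Fin r)).filter fun i => i.val < d ∧ v i = 1)
            ((univ : Finset (Fin r)).filter fun i => d ≤ i.val ∧ i.val < d + mv p v) := by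
          rw [Finset.disjoint_left]
          intro i hi1 hi2
          simp only [Finset.mem_filter, Finset.mem_univ, true_and] at hi1 hi2
          omega
        have hfirst : ((univ : Finset (Fin r)).filter fun i => i.val < d ∧ v i = 1)
            = (univ : Finset (Fin r)).filter fun i => v i = 1 := by
          ext i
          simp only [Finset.mem_filter, Finset.mem_univ, true_and]
          exact ⟨fun h => h.2, fun h => ⟨hwtd i h, h⟩⟩
        rw [hfeq, Finset.card_union_of_disjoint hdisj, hfirst,
          card_filter_val_Ico d (d + mv p v) hdm]
        have hcount : wtv v + (d + mv p v - d) = wtv v + mv p v := by omega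
        show ((wtv v + (d + mv p v - d) : ℕ) : ZMod p) = 0
        rw [hcount, ZMod.natCast_eq_zero_iff]
        -- p ∣ wtv v + mv v
        apply Nat.dvd_of_mod_eq_zero
        rcases Nat.eq_zero_or_pos (wtv v % p) with h0 | h0
        · have hm0 : mv p v = 0 := by simp [mv, h0]
          rw [hm0, Nat.add_zero]
          exact h0
        · have hq : wtv v % p < p := Nat.mod_lt _ hp.pos
          have hm : mv p v = p - wtv v % p := Nat.mod_eq_of_lt (by omega)
          rw [hm, Nat.add_mod, Nat.mod_eq_of_lt (show p - wtv v % p < p by omega)]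
          rw [show wtv v % p + (p - wtv v % p) = p by omega, Nat.mod_self]
    · -- injective on Src
      intro v hv w hw hgw
      simp only [Finset.mem_coe, hSrc, Finset.mem_filter] at hv hw
      funext i
      by_cases h : i.val < d
      · have := congrFun hgw i
        unfold gmap at this
        simpa [h] using this
      · rw [hv.2 i (le_of_not_gt h), hw.2 i (le_of_not_gt h)]
  calc 2 ^ r ≤ 2 ^ (p - 1) * 2 ^ d := by
        rw [← pow_add]
        have h2 : r ≤ p - 1 + d := by clear * - hd; omega
        exact Nat.pow_le_pow_right (by norm_num) h2
    _ ≤ _ := by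
        apply Nat.mul_le_mul_left
        rw [← hcardSrc]; exact hmain

theorem stmt_8 {p : ℕ} (hp : p.Prime) (r t : ℕ) (hr : 1 ≤ r) (ht : 1 ≤ t) :
    ∃ (n : ℕ) (φ : Fin (p ^ t) → Fin n → ZMod p),
      (∀ i j : Fin (p ^ t), i ≠ j → φ i ≠ φ j) ∧
      (∀ i j : Fin (p ^ t), i < j → r ≤ (supp fun z => φ j z - φ i z).card) ∧
      ((2 : ℝ) ^ ((p - 1) * t))⁻¹ ≤
        (((Fintype.piFinset fun _ : Fin n => ({0, 1} : Finset (ZMod p))).filter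
            fun x => ∀ i, evalForm (φ i) x = 0).card : ℝ) / (2 : ℝ) ^ n := by
  haveI : Fact p.Prime := ⟨hp⟩
  haveI : NeZero p := ⟨hp.ne_zero⟩
  have hcard : Fintype.card (Fin t → ZMod p) = p ^ t := by simp [ZMod.card]
  let E : (Fin t → ZMod p) ≃ Fin (p ^ t) := Fintype.equivFinOfCardEq hcard
  let σ : Fin t × Fin r ≃ Fin (t * r) := finProdFinEquiv
  refine ⟨t * r, fun i z => E.symm i (σ.symm z).1, ?_, ?_, ?_⟩
  · -- distinctness
    intro i j hij hphi
    apply hij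
    apply E.symm.injective
    funext j0
    have := congrFun hphi (σ (j0, ⟨0, hr⟩))
    simpa using this
  · -- support size
    intro i j hij
    have hne : E.symm i ≠ E.symm j := fun h => (ne_of_lt hij) (E.symm.injective h)
    obtain ⟨j0, hj0⟩ : ∃ j0, E.symm j j0 - E.symm i j0 ≠ 0 := by
      by_contra h
      push_neg at h
      apply hne
      funext j0
      have := h j0
      rw [sub_eq_zero] at this
      exact this.symm
    have hinj : Function.Injective fun s : Fin r => σ (j0, s) := by
      intro a b h
      have := σ.injective h
      simpa using (Prod.ext_iff.mp this).2
    have hsub : (univ : Finset (Fin r)).image (fun s => σ (j0, s)) ⊆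
        supp fun z => E.symm j (σ.symm z).1 - E.symm i (σ.symm z).1 := by
      intro z hz
      rw [Finset.mem_image] at hz
      obtain ⟨s, _, rfl⟩ := hz
      simp only [supp, Finset.mem_filter, Finset.mem_univ, true_and,
        Equiv.symm_apply_apply]
      exact hj0
    calc r = ((univ : Finset (Fin r)).image (fun s => σ (j0, s))).card := by
          rw [Finset.card_image_of_injective _ hinj, Finset.card_univ, Fintype.card_fin]
      _ ≤ _ := Finset.card_le_card hsub
  · -- density
    have heval : ∀ (w : Fin t → ZMod p) (x : Fin (t * r) → ZMod p),
        evalForm (fun z => w (σ.symm z).1) x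
          = ∑ j0, w j0 * ∑ s, x (σ (j0, s)) := by
      intro w x
      unfold evalForm
      rw [← Equiv.sum_comp σ (fun z => w (σ.symm z).1 * x z), Fintype.sum_prod_type]
      simp [Finset.mul_sum]
    have hpred : ∀ x : Fin (t * r) → ZMod p,
        (∀ i, evalForm (fun z => E.symm i (σ.symm z).1) x = 0) ↔
        (∀ j0 : Fin t, ∑ s : Fin r, x (σ (j0, s)) = 0) := by
      intro x
      constructor
      · intro h j0
        have h2 := h (E (Pi.single j0 1))
        rw [heval] at h2
        simp only [Equiv.symm_apply_apply] at h2
        rw [Fintype.sum_eq_single j0 (fun j0' hj0' => by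
          rw [Pi.single_eq_of_ne hj0', zero_mul])] at h2
        rwa [Pi.single_eq_same, one_mul] at h2
      · intro h i
        rw [heval]
        exact Finset.sum_eq_zero fun j0 _ => by rw [h j0, mul_zero]
    have hsetEq : ((Fintype.piFinset fun _ : Fin (t * r) => ({0, 1} : Finset (ZMod p))).filter
          fun x => ∀ i, evalForm (fun z => E.symm i (σ.symm z).1) x = 0)
        = ((Fintype.piFinset fun _ : Fin (t * r) => ({0, 1} : Finset (ZMod p))).filter
          fun x => ∀ j0 : Fin t, ∑ s : Fin r, x (σ (j0, s)) = 0) :=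
      Finset.filter_congr fun x _ => hpred x
    -- card of the column-condition set
    have hcardG : ((Fintype.piFinset fun _ : Fin (t * r) => ({0, 1} : Finset (ZMod p))).filter
          fun x => ∀ j0 : Fin t, ∑ s : Fin r, x (σ (j0, s)) = 0).card
        = ((Fintype.piFinset fun _ : Fin r => ({0, 1} : Finset (ZMod p))).filter
            fun v => ∑ s, v s = 0).card ^ t := by
      have : ((Fintype.piFinset fun _ : Fin t =>
          ((Fintype.piFinset fun _ : Fin r => ({0, 1} : Finset (ZMod p))).filter
            fun v => ∑ s, v s = 0))).card
          = ((Fintype.piFinset fun _ : Fin r => ({0, 1} : Finset (ZMod p))).filter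
            fun v => ∑ s, v s = 0).card ^ t := by
        rw [Fintype.card_piFinset]
        simp
      rw [← this]
      apply Finset.card_bij' (fun x _ => fun j0 s => x (σ (j0, s)))
        (fun y _ => fun z => y (σ.symm z).1 (σ.symm z).2)
      · intro x hx
        rw [Finset.mem_filter, Fintype.mem_piFinset] at hx
        rw [Fintype.mem_piFinset]
        intro j0
        rw [Finset.mem_filter, Fintype.mem_piFinset]
        exact ⟨fun s => hx.1 _, hx.2 j0⟩
      · intro y hy
        rw [Fintype.mem_piFinset] at hy
        rw [Finset.mem_filter, Fintype.mem_piFinset]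
        constructor
        · intro z
          have := (Finset.mem_filter.mp (hy (σ.symm z).1)).1
          rw [Fintype.mem_piFinset] at this
          exact this _
        · intro j0
          have := (Finset.mem_filter.mp (hy j0)).2
          simpa using this
      · intro x hx
        funext z
        simp
      · intro y hy
        funext j0 s
        simp
    rw [hsetEq, hcardG]
    have hN := keyCount hp r
    have hpow : 2 ^ (t * r) ≤ 2 ^ ((p - 1) * t) *
        ((Fintype.piFinset fun _ : Fin r => ({0, 1} : Finset (ZMod p))).filter
          fun v => ∑ s, v s = 0).card ^ t := by
      calc 2 ^ (t * r) = (2 ^ r) ^ t := by rw [← pow_mul, mul_comm]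
        _ ≤ (2 ^ (p - 1) * _) ^ t := Nat.pow_le_pow_left hN t
        _ = _ := by rw [mul_pow, ← pow_mul]
    rw [le_div_iff₀ (by positivity), inv_mul_le_iff₀ (by positivity)]
    exact_mod_cast hpow
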